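/- arXiv:2207.05151 — 4 statements merged into one kernel-verified Lean document; each statement's English description precedes it below -/
import Mathlib

section
/- Let Γ be a 2n×2n complex positive semidefinite Hermitian matrix, and write ħΓ = D + iħC where D is real symmetric and C is real antisymmetric (D = ħ·Re(Γ), C = Im(Γ)). If C is invertible, then D is positive definite. -/
open Matrix
open scoped ComplexOrder

theorem diffusion_posDef_of_dissipation_invertible
    (n : ℕ) (hbar : ℝ) (hhbar : 0 < hbar)
    (Γ : Matrix (Fin (2 * n)) (Fin (2 * n)) ℂ) (hΓ : Γ.PosSemidef)
    (D C : Matrix (Fin (2 * n)) (Fin (2 * n)) ℝ)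
    (hD : ∀ i j, D i j = hbar * (Γ i j).re)
    (hC : ∀ i j, C i j = (Γ i j).im)
    (hDsymm : D.IsSymm) (hCanti : Cᵀ = -C)
    (hCinv : IsUnit C) :
    D.PosDef := by
  refine posDef_iff_dotProduct_mulVec.mpr ⟨hDsymm, fun x hx => ?_⟩
  set z : Fin (2 * n) → ℂ := fun i => (x i : ℂ) with hz
  set q : ℂ := star z ⬝ᵥ Γ *ᵥ z with hq
  have hre : q.re * hbar = x ⬝ᵥ D *ᵥ x := by
    simp only [hq, hz, dotProduct, mulVec, Pi.star_apply, Complex.re_sum, Finset.sum_mul]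
    refine Finset.sum_congr rfl fun i _ => ?_
    simp only [star, Complex.mul_re, Complex.conj_re, Complex.conj_im, Complex.ofReal_re,
      Complex.ofReal_im, Complex.re_sum, Complex.im_sum, neg_zero, zero_mul, sub_zero,
      Finset.mul_sum, hD]
    rw [Finset.sum_mul]
    refine Finset.sum_congr rfl fun j _ => ?_
    simp only [Complex.mul_re, Complex.ofReal_re, Complex.ofReal_im, mul_zero, sub_zero]
    ring
  have him : q.im = x ⬝ᵥ C *ᵥ x := by
    simp only [hq, hz, dotProduct, mulVec, Pi.star_apply, Complex.im_sum]
    refine Finset.sum_congr rfl fun i _ => ?_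
    simp only [star, Complex.mul_im, Complex.conj_re, Complex.conj_im, Complex.ofReal_re,
      Complex.ofReal_im, Complex.re_sum, Complex.im_sum, neg_zero, zero_mul, add_zero,
      Finset.mul_sum, hC]
    refine Finset.sum_congr rfl fun j _ => ?_
    simp only [Complex.mul_im, Complex.ofReal_re, Complex.ofReal_im, mul_zero, add_zero]
    ring
  have hq0 : 0 ≤ q := hΓ.dotProduct_mulVec_nonneg z
  rw [Complex.le_def] at hq0
  simp only [Complex.zero_re, Complex.zero_im] at hq0
  have hge : 0 ≤ x ⬝ᵥ D *ᵥ x := by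
    rw [← hre]; exact mul_nonneg hq0.1 hhbar.le
  rcases lt_or_eq_of_le hge with h | h
  · simpa only [star_trivial] using h
  · exfalso
    have hqre : q.re = 0 := by
      have := hre; rw [← h] at this; replace this := this
      exact (mul_eq_zero.mp this).resolve_right (ne_of_gt hhbar)
    have hqz : q = 0 := Complex.ext hqre hq0.2.symm
    have hΓz : Γ *ᵥ z = 0 := (hΓ.dotProduct_mulVec_zero_iff z).mp (by rw [← hq]; exact hqz)
    have hCx : C *ᵥ x = 0 := by
      funext i
      have h0 : (Γ *ᵥ z) i = 0 := by rw [hΓz]; rfl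
      have : ((Γ *ᵥ z) i).im = 0 := by rw [h0]; rfl
      rw [mulVec, dotProduct, Complex.im_sum] at this
      simp only [mulVec, dotProduct, hC, Pi.zero_apply]
      rw [← this]
      refine Finset.sum_congr rfl fun j _ => ?_
      simp [hz, Complex.mul_im]
    have : x = 0 := by
      have hinj := Matrix.mulVec_injective_iff_isUnit.mpr hCinv
      have : C *ᵥ x = C *ᵥ 0 := by rw [hCx, Matrix.mulVec_zero]
      exact hinj this
    exact hx this
end

section
/- Let S be a real symplectic 2n×2n matrix (SᵀJS = J) and w = diag(ω₁,…,ωₙ) with all ωⱼ > 0, and set B = Sᵀ(w⊕w)S. For B' real symmetric, [JB, JB'] = 0 implies that the matrix B̃ = S⁻ᵀ B' S⁻¹ has the block form [[x̃, ỹ],[-ỹ, x̃]] with x̃ symmetric, ỹ antisymmetric, and both x̃ and ỹ commuting with w. -/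
/-! Because `S` is symplectic, `J (Sᵀ M S) = S⁻¹ (J M) S` for every `M`, so `[JB, JB'] = 0`
becomes `[J (w ⊕ w), J B̃] = 0`. In blocks this says that conjugation by `w` swaps `x̃` with the
lower-right block and `ỹ` with minus the lower-left block. Swapping twice, `x̃` and `ỹ` commute
with `w²`, hence with `w` since all `ωⱼ > 0`, and then the swapped blocks coincide. Symmetry of
`B̃` does the rest. -/

open Matrix

namespace Matrix

variable {m R : Type*} [Fintype m]

theorem semiconjBy_mul_transpose_mul_mul [Semiring R] {J S : Matrix m m R} (hS : S * J * Sᵀ = J)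
    (M : Matrix m m R) : SemiconjBy S (J * (Sᵀ * M * S)) (J * M) :=
  calc S * (J * (Sᵀ * M * S)) = S * J * Sᵀ * M * S := by simp only [mul_assoc]
    _ = J * M * S := by rw [hS]

variable [DecidableEq m]

theorem commute_diagonal_iff [CommRing R] [NoZeroDivisors R] {d : m → R} {A : Matrix m m R} :
    Commute (diagonal d) A ↔ ∀ i j, d i ≠ d j → A i j = 0 := by
  simp only [commute_iff_eq, ← ext_iff, diagonal_mul, mul_diagonal]
  refine forall₂_congr fun i j => ?_
  rw [mul_comm (A i j), ← sub_eq_zero, ← sub_mul, mul_eq_zero, sub_eq_zero, or_iff_not_imp_left]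

theorem commute_diagonal_of_commute_diagonal_sq [CommRing R] [LinearOrder R] [IsStrictOrderedRing R]
    {d : m → R} (hd : ∀ i, 0 ≤ d i) {A : Matrix m m R} (h : Commute (diagonal d ^ 2) A) :
    Commute (diagonal d) A := by
  rw [sq, diagonal_mul_diagonal, commute_diagonal_iff] at h
  rw [commute_diagonal_iff]
  exact fun i j hij => h i j fun hsq => hij ((mul_self_inj (hd i) (hd j)).mp hsq)

theorem eq_and_commute_of_diagonal_semiconjBy [Field R] [LinearOrder R] [IsStrictOrderedRing R]
    {d : m → R} (hd : ∀ i, 0 < d i) {A A' : Matrix m m R}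
    (h : SemiconjBy (diagonal d) A A') (h' : SemiconjBy (diagonal d) A' A) :
    A' = A ∧ Commute (diagonal d) A := by
  have hsq : Commute (diagonal d ^ 2) A := by
    rw [sq]
    exact h'.mul_left h
  have hcomm := commute_diagonal_of_commute_diagonal_sq (fun i => (hd i).le) hsq
  have hunit : IsUnit (diagonal d) :=
    isUnit_diagonal.mpr (Pi.isUnit_iff.mpr fun i => (hd i).ne'.isUnit)
  exact ⟨hunit.mul_right_cancel (h.symm.trans hcomm.eq), hcomm⟩

theorem semiconjBy_blocks_of_commute [CommRing R] {W A B C D : Matrix m m R}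
    (h : Commute (fromBlocks 0 1 (-1) 0 * fromBlocks W 0 0 W)
      (fromBlocks 0 1 (-1) 0 * fromBlocks A B C D)) :
    SemiconjBy W A D ∧ SemiconjBy W D A ∧ SemiconjBy W B (-C) ∧ SemiconjBy W (-C) B := by
  simp only [commute_iff_eq, fromBlocks_multiply, fromBlocks_inj] at h
  simp only [zero_mul, mul_zero, add_zero, one_mul, zero_add, neg_mul, mul_neg, neg_inj, neg_zero,
    neg_neg] at h
  obtain ⟨hAD, hBC, hCB, hDA⟩ := h
  refine ⟨hAD, hDA, ?_, ?_⟩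
  · rw [SemiconjBy, neg_mul, ← hBC, neg_neg]
  · rw [SemiconjBy, mul_neg, hCB]

end Matrix

theorem Commute.of_semiconjBy {M : Type*} [Monoid M] {a x x' y y' : M} (ha : IsUnit a)
    (hx : SemiconjBy a x y) (hx' : SemiconjBy a x' y') (h : Commute x x') : Commute y y' :=
  ha.mul_right_cancel <| by rw [← (hx.mul_right hx').eq, ← (hx'.mul_right hx).eq, h.eq]

theorem block_structure_of_commuting_hessian
    (n : ℕ) (S : Matrix (Fin n ⊕ Fin n) (Fin n ⊕ Fin n) ℝ)
    (J : Matrix (Fin n ⊕ Fin n) (Fin n ⊕ Fin n) ℝ)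
    (hJ : J = Matrix.fromBlocks 0 1 (-1) 0)
    (hS : Sᵀ * J * S = J)
    (w : Fin n → ℝ) (hw : ∀ j, 0 < w j)
    (B B' : Matrix (Fin n ⊕ Fin n) (Fin n ⊕ Fin n) ℝ)
    (hB : B = Sᵀ * Matrix.fromBlocks (Matrix.diagonal w) 0 0 (Matrix.diagonal w) * S)
    (hB' : B'.IsSymm)
    (hcomm : (J * B) * (J * B') = (J * B') * (J * B)) :
    ∃ x y : Matrix (Fin n) (Fin n) ℝ,
      x.IsSymm ∧ yᵀ = -y ∧
      x * Matrix.diagonal w = Matrix.diagonal w * x ∧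
      y * Matrix.diagonal w = Matrix.diagonal w * y ∧
      (Sᵀ)⁻¹ * B' * S⁻¹ = Matrix.fromBlocks x y (-y) x := by
  have hJ_neg : J = -Matrix.J (Fin n) ℝ := by
    rw [hJ, Matrix.J, fromBlocks_neg, neg_zero, neg_neg]
  have hS_mem : S ∈ symplecticGroup (Fin n) ℝ := by
    rw [SymplecticGroup.mem_iff']
    simpa only [hJ_neg, mul_neg, neg_mul, neg_inj] using hS
  have hSJS : S * J * Sᵀ = J := by
    simpa only [hJ_neg, mul_neg, neg_mul, neg_inj] using SymplecticGroup.mem_iff.mp hS_mem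
  have hS_det : IsUnit S.det := SymplecticGroup.symplectic_det hS_mem
  set B₀ := (Sᵀ)⁻¹ * B' * S⁻¹
  have hB'_congr : B' = Sᵀ * B₀ * S := by
    simp only [B₀, mul_assoc, nonsing_inv_mul _ hS_det, mul_one,
      mul_nonsing_inv_cancel_left _ _ (S.det_transpose ▸ hS_det)]
  have hB₀_symm : B₀.IsSymm := by
    simp only [B₀, IsSymm, transpose_mul, transpose_nonsing_inv, transpose_transpose, hB'.eq,
      mul_assoc]
  have hcomm₀ : Commute (J * fromBlocks (diagonal w) 0 0 (diagonal w)) (J * B₀) :=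
    Commute.of_semiconjBy ((isUnit_iff_isUnit_det S).mpr hS_det)
      (hB ▸ semiconjBy_mul_transpose_mul_mul hSJS _)
      (hB'_congr ▸ semiconjBy_mul_transpose_mul_mul hSJS _) hcomm
  obtain ⟨x, y, z, t, hB₀⟩ : ∃ x y z t, B₀ = fromBlocks x y z t :=
    ⟨_, _, _, _, (fromBlocks_toBlocks B₀).symm⟩
  rw [hB₀, hJ] at hcomm₀
  obtain ⟨hxt, htx, hyz, hzy⟩ := semiconjBy_blocks_of_commute hcomm₀
  obtain ⟨rfl, hx⟩ := eq_and_commute_of_diagonal_semiconjBy hw htx hxt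
  obtain ⟨rfl, hy⟩ := eq_and_commute_of_diagonal_semiconjBy hw hyz hzy
  obtain ⟨hx_symm, hyz_transpose, -, -⟩ := isSymm_fromBlocks_iff.mp (hB₀ ▸ hB₀_symm)
  refine ⟨x, -z, hx_symm, by rw [hyz_transpose, neg_neg], hx.eq.symm, hy.eq.symm, ?_⟩
  rw [hB₀, neg_neg]
end

section
/- Let B, B' be real symmetric 2n×2n matrices with B positive definite and [JB, JB'] = 0. Then there exists a symplectic matrix S and real diagonal matrices w > 0 and λ such that S⁻ᵀBS⁻¹ = w⊕w and S⁻ᵀB'S⁻¹ = λ⊕λ (simultaneous symplectic 'diagonalization'). -/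
open Matrix Module.End Submodule

variable {E : Type*} [NormedAddCommGroup E] [InnerProductSpace ℝ E] [FiniteDimensional ℝ E]

lemma exists_joint_eigenvector [Nontrivial E] {A B : E →ₗ[ℝ] E}
    (hA : A.IsSymmetric) (hB : B.IsSymmetric) (hAB : A * B = B * A) :
    ∃ (v : E) (a b : ℝ), v ≠ 0 ∧ A v = a • v ∧ B v = b • v := by
  by_contra h
  push_neg at h
  have hbot : ∀ (a b : ℝ), eigenspace A a ⊓ eigenspace B b = ⊥ := by
    intro a b
    rw [eq_bot_iff]
    intro v hv
    rcases hv with ⟨hv1, hv2⟩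
    rw [SetLike.mem_coe, mem_eigenspace_iff] at hv1 hv2
    by_contra hv0
    exact h v a b (by simpa using hv0) hv1 hv2
  have := LinearMap.IsSymmetric.iSup_iSup_eigenspace_inf_eigenspace_eq_top_of_commute hA hB hAB
  simp only [hbot, iSup_bot] at this
  exact bot_ne_top this

set_option maxHeartbeats 2000000 in
open RealInnerProductSpace in
lemma core_induction (n : ℕ) (T C : E →ₗ[ℝ] E)
    (hT : ∀ x y, ⟪T x, y⟫ = -⟪x, T y⟫) (hC : C.IsSymmetric) (hTC : T * C = C * T) :
    ∀ (V : Submodule ℝ E)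
    (hTV : ∀ x ∈ V, T x ∈ V) (hCV : ∀ x ∈ V, C x ∈ V)
    (_hTinj : ∀ x ∈ V, T x = 0 → x = 0)
    (_hdim : Module.finrank ℝ V = 2 * n),
    ∃ (e : Fin n ⊕ Fin n → E) (d μ : Fin n → ℝ),
      (∀ a, e a ∈ V) ∧ Orthonormal ℝ e ∧ (∀ j, 0 < d j) ∧
      (∀ j, T (e (Sum.inl j)) = -(d j) • e (Sum.inr j)) ∧
      (∀ j, T (e (Sum.inr j)) = d j • e (Sum.inl j)) ∧
      (∀ j, C (e (Sum.inl j)) = μ j • e (Sum.inl j)) ∧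
      (∀ j, C (e (Sum.inr j)) = μ j • e (Sum.inr j)) := by
  induction n with
  | zero =>
    intro V _ _ _ _
    refine ⟨Sum.elim Fin.elim0 Fin.elim0, Fin.elim0, Fin.elim0,
      fun a => a.elim (fun i => i.elim0) (fun i => i.elim0), ?_,
      fun j => j.elim0, fun j => j.elim0, fun j => j.elim0, fun j => j.elim0, fun j => j.elim0⟩
    rw [orthonormal_iff_ite]
    exact fun i => i.elim (fun j => j.elim0) (fun j => j.elim0)
  | succ n ih =>
    intro V hTV hCV hTinj hdim
    -- V is nontrivial
    have hVnt : Nontrivial (↥V) := by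
      apply Module.nontrivial_of_finrank_pos (R := ℝ)
      omega
    -- restricted operators
    set Tv : ↥V →ₗ[ℝ] ↥V := T.restrict hTV with hTvdef
    set Cv : ↥V →ₗ[ℝ] ↥V := C.restrict hCV with hCvdef
    have hTC' : ∀ x, T (C x) = C (T x) := fun x => by
      have := congrFun (congrArg (fun f => f.toFun) hTC) x
      simpa using this
    have hCvsymm : Cv.IsSymmetric := hC.restrict_invariant hCV
    have hT2symm : (Tv * Tv).IsSymmetric := by
      intro x y
      have h1 : ((Tv * Tv) x : E) = T (T ↑x) := by
        simp [hTvdef, LinearMap.restrict_coe_apply]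
      have h2 : ((Tv * Tv) y : E) = T (T ↑y) := by
        simp [hTvdef, LinearMap.restrict_coe_apply]
      rw [Submodule.coe_inner, Submodule.coe_inner, h1, h2, hT, hT, neg_neg]
    have hcomm : Cv * (Tv * Tv) = (Tv * Tv) * Cv := by
      ext x
      have : ∀ z : ↥V, ((Cv * (Tv * Tv)) z : E) = C (T (T ↑z)) := fun z => by
        simp [hTvdef, hCvdef, LinearMap.restrict_coe_apply]
      have h2 : ∀ z : ↥V, (((Tv * Tv) * Cv) z : E) = T (T (C ↑z)) := fun z => by
        simp [hTvdef, hCvdef, LinearMap.restrict_coe_apply]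
      have : ((Cv * (Tv * Tv)) x : E) = (((Tv * Tv) * Cv) x : E) := by
        rw [this, h2, hTC', hTC']
      exact this
    obtain ⟨w, μ0, β, hw0, hCw, hT2w⟩ := exists_joint_eigenvector hCvsymm hT2symm hcomm
    -- transfer to E
    have hwV : (w : E) ∈ V := w.2
    have hwne : (w : E) ≠ 0 := fun h => hw0 (Subtype.ext h)
    have hCwE : C (w : E) = μ0 • (w : E) := by
      have := congrArg (Subtype.val) hCw
      simpa [hCvdef, LinearMap.restrict_coe_apply] using this
    have hT2wE : T (T (w : E)) = β • (w : E) := by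
      have := congrArg (Subtype.val) hT2w
      simpa [hTvdef, LinearMap.restrict_coe_apply] using this
    have hTwne : T (w : E) ≠ 0 := fun h => hwne (hTinj _ hwV h)
    -- β < 0
    have hβ : β < 0 := by
      have h1 : ⟪T (T (w:E)), (w:E)⟫ = -‖T (w:E)‖^2 := by
        rw [hT, real_inner_self_eq_norm_sq]
      rw [hT2wE, real_inner_smul_left, real_inner_self_eq_norm_sq] at h1
      nlinarith [norm_pos_iff.mpr hTwne, norm_pos_iff.mpr hwne, sq_nonneg ‖T (w:E)‖,
        mul_pos (norm_pos_iff.mpr hTwne) (norm_pos_iff.mpr hTwne)]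
    obtain ⟨α, hα, hα2⟩ : ∃ a : ℝ, 0 < a ∧ a ^ 2 = -β :=
      ⟨Real.sqrt (-β), Real.sqrt_pos.mpr (by linarith), Real.sq_sqrt (by linarith)⟩
    have hαne : α ≠ 0 := ne_of_gt hα
    have hβα : β = -(α * α) := by nlinarith [hα2]
    -- u and f
    obtain ⟨u, hudef⟩ : ∃ x : E, x = ‖(w:E)‖⁻¹ • (w:E) := ⟨_, rfl⟩
    obtain ⟨f, hfdef⟩ : ∃ x : E, x = (-(α⁻¹)) • T u := ⟨_, rfl⟩
    have huV : u ∈ V := hudef ▸ V.smul_mem _ hwV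
    have hfV : f ∈ V := hfdef ▸ V.smul_mem _ (hTV _ huV)
    have hunorm : ‖u‖ = 1 := hudef ▸ norm_smul_inv_norm hwne
    have hCu : C u = μ0 • u := by
      simp only [hudef, _root_.map_smul, hCwE]
      rw [smul_comm]
    have hT2u : T (T u) = β • u := by
      simp only [hudef, _root_.map_smul, hT2wE]
      rw [smul_comm]
    have hTu : T u = -α • f := by
      rw [hfdef, smul_smul, show -α * -α⁻¹ = 1 by
        rw [neg_mul_neg, mul_inv_cancel₀ hαne], one_smul]
    have hTf : T f = α • u := by
      rw [hfdef, _root_.map_smul, hT2u, smul_smul]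
      congr 1
      rw [hβα, neg_mul_neg, ← mul_assoc, inv_mul_cancel₀ hαne, one_mul]
    have hCf : C f = μ0 • f := by
      rw [hfdef, _root_.map_smul, ← hTC', hCu, _root_.map_smul, smul_comm]
    have hufinner : ⟪u, f⟫ = 0 := by
      have h1 : ⟪T u, u⟫ = -⟪u, T u⟫ := hT u u
      have h2 : ⟪T u, u⟫ = ⟪u, T u⟫ := real_inner_comm _ _
      have h3 : ⟪u, T u⟫ = 0 := by linarith
      rw [hfdef, real_inner_smul_right, h3, mul_zero]
    have hfnorm : ‖f‖ = 1 := by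
      have h2 : ⟪T u, T u⟫ = -β := by
        rw [hT, hT2u, real_inner_smul_right, real_inner_self_eq_norm_sq, hunorm]
        ring
      have h1 : ⟪f, f⟫ = 1 := by
        rw [hfdef, real_inner_smul_left, real_inner_smul_right, h2, hβα, neg_neg]
        have hre : -α⁻¹ * (-α⁻¹ * (α * α)) = (α⁻¹ * α) * (α⁻¹ * α) := by ring
        rw [hre, inv_mul_cancel₀ hαne, one_mul]
      have h3 : ‖f‖ ^ 2 = 1 := by
        have := real_inner_self_eq_norm_sq f
        linarith [h1, this]
      nlinarith [norm_nonneg f]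
    -- inner product facts
    have huu : ⟪u, u⟫ = 1 := by rw [real_inner_self_eq_norm_sq, hunorm]; norm_num
    have hff : ⟪f, f⟫ = 1 := by rw [real_inner_self_eq_norm_sq, hfnorm]; norm_num
    have hfu : ⟪f, u⟫ = 0 := by rw [real_inner_comm]; exact hufinner
    -- the span of u and f
    set g : Fin 2 → E := ![u, f] with hgdef
    have hgon : Orthonormal ℝ g := by
      rw [orthonormal_iff_ite]
      intro i j
      fin_cases i <;> fin_cases j <;>
        simp [hgdef, huu, hff, hfu, hufinner, hfnorm, hunorm]
    set W : Submodule ℝ E := Submodule.span ℝ (Set.range g) with hWdef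
    have huW : u ∈ W := Submodule.subset_span ⟨0, rfl⟩
    have hfW : f ∈ W := Submodule.subset_span ⟨1, rfl⟩
    have hWle : W ≤ V := Submodule.span_le.mpr (by
      rintro x ⟨i, rfl⟩
      fin_cases i
      · exact huV
      · exact hfV)
    have hWrank : Module.finrank ℝ W = 2 := by
      rw [hWdef, finrank_span_eq_card hgon.linearIndependent]
      simp
    set V' : Submodule ℝ E := Wᗮ ⊓ V with hV'def
    have hV'dim : Module.finrank ℝ V' = 2 * n := by
      apply Submodule.finrank_add_inf_finrank_orthogonal' hWle
      rw [hWrank, hdim]; omega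
    have hV'leV : V' ≤ V := inf_le_right
    have hspan : ∀ (x : E), ⟪u, x⟫ = 0 → ⟪f, x⟫ = 0 → x ∈ Wᗮ := by
      intro x h1 h2
      rw [Submodule.mem_orthogonal]
      intro y hy
      induction hy using Submodule.span_induction with
      | mem y hy =>
        rcases hy with ⟨i, rfl⟩
        fin_cases i
        · exact h1
        · exact h2
      | zero => simp
      | add a b _ _ ha hb => rw [inner_add_left, ha, hb, add_zero]
      | smul c a _ ha => rw [real_inner_smul_left, ha, mul_zero]
    have horthu : ∀ x ∈ V', ⟪u, x⟫ = 0 := fun x hx =>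
      (Submodule.mem_orthogonal W x).mp hx.1 u huW
    have horthf : ∀ x ∈ V', ⟪f, x⟫ = 0 := fun x hx =>
      (Submodule.mem_orthogonal W x).mp hx.1 f hfW
    -- invariance of V'
    have hTV' : ∀ x ∈ V', T x ∈ V' := by
      intro x hx
      refine ⟨hspan _ ?_ ?_, hTV x hx.2⟩
      · have h1 := hT u x
        rw [hTu, real_inner_smul_left] at h1
        rw [horthf x hx] at h1
        have := h1.symm
        rw [mul_zero] at this
        linarith [this]
      · have h1 := hT f x
        rw [hTf, real_inner_smul_left] at h1
        rw [horthu x hx] at h1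
        rw [mul_zero] at h1
        linarith [h1]
    have hCV' : ∀ x ∈ V', C x ∈ V' := by
      intro x hx
      refine ⟨hspan _ ?_ ?_, hCV x hx.2⟩
      · rw [real_inner_comm, hC, hCu, real_inner_smul_right, real_inner_comm,
          horthu x hx, mul_zero]
      · rw [real_inner_comm, hC, hCf, real_inner_smul_right, real_inner_comm,
          horthf x hx, mul_zero]
    have hTinj' : ∀ x ∈ V', T x = 0 → x = 0 := fun x hx => hTinj x hx.2
    obtain ⟨e', d', μ', he'mem, he'on, hd', hT1', hT2', hC1', hC2'⟩ :=
      ih V' hTV' hCV' hTinj' hV'dim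
    -- orthogonality of e' vectors against u, f
    have hue' : ∀ c, ⟪u, e' c⟫ = 0 := fun c => horthu _ (he'mem c)
    have hfe' : ∀ c, ⟪f, e' c⟫ = 0 := fun c => horthf _ (he'mem c)
    have he'u : ∀ c, ⟪e' c, u⟫ = 0 := fun c => by rw [real_inner_comm]; exact hue' c
    have he'f : ∀ c, ⟪e' c, f⟫ = 0 := fun c => by rw [real_inner_comm]; exact hfe' c
    have he'ite : ∀ a b, ⟪e' a, e' b⟫ = if a = b then 1 else 0 :=
      orthonormal_iff_ite.mp he'on
    -- assemble
    set e : Fin (n+1) ⊕ Fin (n+1) → E :=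
      Sum.elim (Fin.cons u fun j => e' (Sum.inl j)) (Fin.cons f fun j => e' (Sum.inr j))
      with hedef
    have heinl0 : e (Sum.inl 0) = u := rfl
    have heinr0 : e (Sum.inr 0) = f := rfl
    have heinls : ∀ j : Fin n, e (Sum.inl j.succ) = e' (Sum.inl j) := fun j => by
      simp [hedef]
    have heinrs : ∀ j : Fin n, e (Sum.inr j.succ) = e' (Sum.inr j) := fun j => by
      simp [hedef]
    refine ⟨e, Fin.cons α d', Fin.cons μ0 μ', ?_, ?_, ?_, ?_, ?_, ?_, ?_⟩
    · rintro (i | i)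
      · induction i using Fin.cases with
        | zero => exact huV
        | succ j => rw [heinls]; exact hV'leV (he'mem _)
      · induction i using Fin.cases with
        | zero => exact hfV
        | succ j => rw [heinrs]; exact hV'leV (he'mem _)
    · rw [orthonormal_iff_ite]
      rintro (i | i) (j | j) <;>
        induction i using Fin.cases <;>
        induction j using Fin.cases <;>
        simp [heinl0, heinr0, heinls, heinrs, huu, hff, hfu, hufinner,
          hue', hfe', he'u, he'f, he'ite, Fin.succ_ne_zero, (Fin.succ_ne_zero _).symm,
          Fin.succ_inj, hfnorm, hunorm]
    · intro j
      induction j using Fin.cases with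
      | zero => simpa using hα
      | succ j => simpa using hd' j
    · intro j
      induction j using Fin.cases with
      | zero => rw [heinl0, heinr0, Fin.cons_zero]; exact hTu
      | succ j => rw [heinls, heinrs, Fin.cons_succ]; exact hT1' j
    · intro j
      induction j using Fin.cases with
      | zero => rw [heinl0, heinr0, Fin.cons_zero]; exact hTf
      | succ j => rw [heinls, heinrs, Fin.cons_succ]; exact hT2' j
    · intro j
      induction j using Fin.cases with
      | zero => rw [heinl0, Fin.cons_zero]; exact hCu
      | succ j => rw [heinls, Fin.cons_succ]; exact hC1' j
    · intro j
      induction j using Fin.cases with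
      | zero => rw [heinr0, Fin.cons_zero]; exact hCf
      | succ j => rw [heinrs, Fin.cons_succ]; exact hC2' j

open RealInnerProductSpace in
lemma matrix_core (n : ℕ) (K C : Matrix (Fin n ⊕ Fin n) (Fin n ⊕ Fin n) ℝ)
    (hK : Kᵀ = -K) (hKinj : ∀ x, K.mulVec x = 0 → x = 0)
    (hCs : Cᵀ = C) (hKC : K * C = C * K) :
    ∃ (O : Matrix (Fin n ⊕ Fin n) (Fin n ⊕ Fin n) ℝ) (d μ : Fin n → ℝ),
      O * Oᵀ = 1 ∧ Oᵀ * O = 1 ∧ (∀ j, 0 < d j) ∧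
      O * K * Oᵀ = Matrix.fromBlocks 0 (Matrix.diagonal d) (-(Matrix.diagonal d)) 0 ∧
      O * C * Oᵀ = Matrix.fromBlocks (Matrix.diagonal μ) 0 0 (Matrix.diagonal μ) := by
  classical
  set T : EuclideanSpace ℝ (Fin n ⊕ Fin n) →ₗ[ℝ] EuclideanSpace ℝ (Fin n ⊕ Fin n) :=
    Matrix.toEuclideanLin K with hTdef
  set Cl : EuclideanSpace ℝ (Fin n ⊕ Fin n) →ₗ[ℝ] EuclideanSpace ℝ (Fin n ⊕ Fin n) :=
    Matrix.toEuclideanLin C with hCldef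
  have happ : ∀ (A : Matrix (Fin n ⊕ Fin n) (Fin n ⊕ Fin n) ℝ)
      (x : EuclideanSpace ℝ (Fin n ⊕ Fin n)) (i),
      (Matrix.toEuclideanLin A x) i = A.mulVec x i := fun A x i => rfl
  have hinner : ∀ x y : EuclideanSpace ℝ (Fin n ⊕ Fin n), ⟪x, y⟫ = ∑ i, x i * y i :=
    fun x y => by
    rw [PiLp.inner_apply]
    exact Finset.sum_congr rfl fun i _ => by simp [RCLike.inner_apply, mul_comm]
  have hTskew : ∀ x y : EuclideanSpace ℝ (Fin n ⊕ Fin n), ⟪T x, y⟫ = -⟪x, T y⟫ := by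
    intro x y
    rw [hinner, hinner]
    have h1 : ∀ i, (T x) i = ∑ j, K i j * x j := fun i => happ K x i
    have h2 : ∀ i, (T y) i = ∑ j, K i j * y j := fun i => happ K y i
    simp only [h1, h2, Finset.sum_mul, Finset.mul_sum, ← Finset.sum_neg_distrib]
    rw [Finset.sum_comm]
    refine Finset.sum_congr rfl fun i _ => Finset.sum_congr rfl fun j _ => ?_
    have : K j i = -K i j := by
      have := congrFun (congrFun hK i) j
      simpa [Matrix.transpose_apply, Matrix.neg_apply] using this
    rw [this]; ring
  have hCsymm : Cl.IsSymmetric := by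
    intro x y
    rw [hinner, hinner]
    have h1 : ∀ i, (Cl x) i = ∑ j, C i j * x j := fun i => happ C x i
    have h2 : ∀ i, (Cl y) i = ∑ j, C i j * y j := fun i => happ C y i
    simp only [h1, h2, Finset.sum_mul, Finset.mul_sum]
    rw [Finset.sum_comm]
    refine Finset.sum_congr rfl fun i _ => Finset.sum_congr rfl fun j _ => ?_
    have : C j i = C i j := by
      have := congrFun (congrFun hCs i) j
      simpa [Matrix.transpose_apply] using this
    rw [this]; ring
  have hcomm : T * Cl = Cl * T := by
    apply LinearMap.ext
    intro x
    apply PiLp.ext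
    intro i
    show (K.mulVec (C.mulVec x)) i = (C.mulVec (K.mulVec x)) i
    rw [Matrix.mulVec_mulVec, Matrix.mulVec_mulVec, hKC]
  have hTinj : ∀ x ∈ (⊤ : Submodule ℝ (EuclideanSpace ℝ (Fin n ⊕ Fin n))), T x = 0 → x = 0 := by
    intro x _ hx
    have h0 : K.mulVec x.ofLp = 0 := by
      funext i
      have := congrArg (fun z : EuclideanSpace ℝ (Fin n ⊕ Fin n) => z.ofLp i) hx
      rw [hTdef] at this
      simpa [happ] using this
    have := hKinj _ h0
    exact WithLp.ofLp_injective 2 (by simpa using this)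
  have hdim : Module.finrank ℝ
      (⊤ : Submodule ℝ (EuclideanSpace ℝ (Fin n ⊕ Fin n))) = 2 * n := by
    rw [finrank_top, finrank_euclideanSpace]
    simp [two_mul]
  obtain ⟨e, d, μ, _, heon, hd, hT1, hT2, hC1, hC2⟩ :=
    core_induction n T Cl hTskew hCsymm hcomm ⊤ (fun x _ => trivial) (fun x _ => trivial)
      hTinj hdim
  have heite : ∀ a b, ⟪e a, e b⟫ = if a = b then 1 else 0 := orthonormal_iff_ite.mp heon
  set O : Matrix (Fin n ⊕ Fin n) (Fin n ⊕ Fin n) ℝ := Matrix.of fun a i => e a i with hOdef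
  have hOO : O * Oᵀ = 1 := by
    ext a b
    rw [Matrix.mul_apply]
    have : ∑ i, O a i * Oᵀ i b = ⟪e a, e b⟫ := by
      rw [hinner]
      exact Finset.sum_congr rfl fun i _ => rfl
    rw [this, heite]
    simp [Matrix.one_apply]
  have hOO' : Oᵀ * O = 1 := mul_eq_one_comm.mp hOO
  -- key: (O * A * Oᵀ) a b = ⟪e a, toEuclideanLin A (e b)⟫
  have hconj : ∀ (A : Matrix (Fin n ⊕ Fin n) (Fin n ⊕ Fin n) ℝ) (a b),
      (O * A * Oᵀ) a b = ⟪e a, Matrix.toEuclideanLin A (e b)⟫ := by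
    intro A a b
    rw [hinner, Matrix.mul_apply]
    simp only [Matrix.mul_apply, Matrix.transpose_apply, Finset.sum_mul]
    rw [Finset.sum_comm]
    refine Finset.sum_congr rfl fun i _ => ?_
    have : (Matrix.toEuclideanLin A (e b)) i = ∑ j, A i j * e b j := happ A (e b) i
    rw [this, Finset.mul_sum]
    refine Finset.sum_congr rfl fun j _ => ?_
    show O a i * A i j * O b j = e a i * (A i j * e b j)
    simp only [hOdef, Matrix.of_apply]
    ring
  refine ⟨O, d, μ, hOO, hOO', hd, ?_, ?_⟩
  · ext a b
    rw [hconj K a b]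
    rcases b with j | j
    · rw [show Matrix.toEuclideanLin K (e (Sum.inl j)) = -(d j) • e (Sum.inr j) from hT1 j,
        real_inner_smul_right, heite]
      rcases a with i | i
      · simp [Matrix.fromBlocks]
      · by_cases h : i = j
        · subst h; simp [Matrix.fromBlocks, Matrix.diagonal_apply]
        · simp [Matrix.fromBlocks, Matrix.diagonal_apply, h, Sum.inr.injEq]
    · rw [show Matrix.toEuclideanLin K (e (Sum.inr j)) = (d j) • e (Sum.inl j) from hT2 j,
        real_inner_smul_right, heite]
      rcases a with i | i
      · by_cases h : i = j
        · subst h; simp [Matrix.fromBlocks, Matrix.diagonal_apply]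
        · simp [Matrix.fromBlocks, Matrix.diagonal_apply, h, Sum.inl.injEq]
      · simp [Matrix.fromBlocks]
  · ext a b
    rw [hconj C a b]
    rcases b with j | j
    · rw [show Matrix.toEuclideanLin C (e (Sum.inl j)) = (μ j) • e (Sum.inl j) from hC1 j,
        real_inner_smul_right, heite]
      rcases a with i | i
      · by_cases h : i = j
        · subst h; simp [Matrix.fromBlocks, Matrix.diagonal_apply]
        · simp [Matrix.fromBlocks, Matrix.diagonal_apply, h, Sum.inl.injEq]
      · simp [Matrix.fromBlocks]
    · rw [show Matrix.toEuclideanLin C (e (Sum.inr j)) = (μ j) • e (Sum.inr j) from hC2 j,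
        real_inner_smul_right, heite]
      rcases a with i | i
      · simp [Matrix.fromBlocks]
      · by_cases h : i = j
        · subst h; simp [Matrix.fromBlocks, Matrix.diagonal_apply]
        · simp [Matrix.fromBlocks, Matrix.diagonal_apply, h, Sum.inr.injEq]

set_option maxHeartbeats 1000000 in
theorem simultaneous_symplectic_diagonalization
    (n : ℕ)
    (J : Matrix (Fin n ⊕ Fin n) (Fin n ⊕ Fin n) ℝ)
    (hJ : J = Matrix.fromBlocks 0 1 (-1) 0)
    (B B' : Matrix (Fin n ⊕ Fin n) (Fin n ⊕ Fin n) ℝ)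
    (hBsymm : B.IsSymm) (hBpos : B.PosDef) (hB'symm : B'.IsSymm)
    (hcomm : (J * B) * (J * B') = (J * B') * (J * B)) :
    ∃ (S : Matrix (Fin n ⊕ Fin n) (Fin n ⊕ Fin n) ℝ) (w lam : Fin n → ℝ),
      Sᵀ * J * S = J ∧ (∀ j, 0 < w j) ∧
      (Sᵀ)⁻¹ * B * S⁻¹ = Matrix.fromBlocks (Matrix.diagonal w) 0 0 (Matrix.diagonal w) ∧
      (Sᵀ)⁻¹ * B' * S⁻¹ = Matrix.fromBlocks (Matrix.diagonal lam) 0 0 (Matrix.diagonal lam) := by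
  classical
  -- square root of B
  obtain ⟨R, hRR, hRsym⟩ : ∃ R : Matrix (Fin n ⊕ Fin n) (Fin n ⊕ Fin n) ℝ, R * R = B ∧ Rᵀ = R := by
    open scoped MatrixOrder in
    (refine ⟨CFC.sqrt B, CFC.sqrt_mul_sqrt_self B (Matrix.nonneg_iff_posSemidef.mpr hBpos.posSemidef), ?_⟩
     have := (Matrix.nonneg_iff_posSemidef.mp (CFC.sqrt_nonneg B)).isHermitian
     rwa [Matrix.IsHermitian, Matrix.conjTranspose_eq_transpose_of_trivial] at this)
  have hBdet : IsUnit B.det := isUnit_iff_ne_zero.mpr (ne_of_gt hBpos.det_pos)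
  have hRdet : IsUnit R.det := by
    have h : R.det * R.det = B.det := by rw [← Matrix.det_mul, hRR]
    have := h ▸ hBdet
    exact isUnit_of_mul_isUnit_left this
  have hRRinv : R * R⁻¹ = 1 := Matrix.mul_nonsing_inv R hRdet
  have hRinvR : R⁻¹ * R = 1 := Matrix.nonsing_inv_mul R hRdet
  have hRinvsym : (R⁻¹)ᵀ = R⁻¹ := by rw [Matrix.transpose_nonsing_inv, hRsym]
  have hRr : ∀ X, R * (R⁻¹ * X) = X := fun X => by
    rw [← Matrix.mul_assoc, hRRinv, Matrix.one_mul]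
  have hRr' : ∀ X, R⁻¹ * (R * X) = X := fun X => by
    rw [← Matrix.mul_assoc, hRinvR, Matrix.one_mul]
  -- J facts
  have hJT : Jᵀ = -J := by
    rw [hJ, Matrix.fromBlocks_transpose]
    rw [show -(Matrix.fromBlocks 0 1 (-1) 0 :
        Matrix (Fin n ⊕ Fin n) (Fin n ⊕ Fin n) ℝ) = Matrix.fromBlocks 0 (-1) 1 0 by
      rw [Matrix.fromBlocks_neg]; norm_num]
    simp
  have hJJ : J * J = -1 := by
    rw [hJ, Matrix.fromBlocks_multiply]
    rw [show -(1 : Matrix (Fin n ⊕ Fin n) (Fin n ⊕ Fin n) ℝ) =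
        Matrix.fromBlocks (-1) 0 0 (-1) by rw [← Matrix.fromBlocks_one, Matrix.fromBlocks_neg]; norm_num]
    simp
  have hJinv : J * (-J) = 1 := by rw [Matrix.mul_neg, hJJ, neg_neg]
  have hJinv' : (-J) * J = 1 := by rw [Matrix.neg_mul, hJJ, neg_neg]
  -- commutation at the level of B, B'
  have hBJB : B * (J * B') = B' * (J * B) := by
    have h2 : J * (B * (J * B')) = J * (B' * (J * B)) := by
      calc J * (B * (J * B')) = (J * B) * (J * B') := by rw [Matrix.mul_assoc]
      _ = (J * B') * (J * B) := hcomm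
      _ = J * (B' * (J * B)) := by rw [Matrix.mul_assoc]
    calc B * (J * B') = ((-J) * J) * (B * (J * B')) := by rw [hJinv', Matrix.one_mul]
    _ = (-J) * (J * (B * (J * B'))) := by rw [Matrix.mul_assoc]
    _ = (-J) * (J * (B' * (J * B))) := by rw [h2]
    _ = ((-J) * J) * (B' * (J * B)) := by rw [← Matrix.mul_assoc]
    _ = B' * (J * B) := by rw [hJinv', Matrix.one_mul]
  set K := R * J * R with hKdef
  set Cm := R⁻¹ * B' * R⁻¹ with hCmdef
  have hKskew : Kᵀ = -K := by
    rw [hKdef, Matrix.transpose_mul, Matrix.transpose_mul, hRsym, hJT]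
    simp only [Matrix.mul_neg, Matrix.neg_mul, Matrix.mul_assoc]
  have hJr : ∀ X, J * (-J * X) = X := fun X => by
    rw [← Matrix.mul_assoc, hJinv, Matrix.one_mul]
  have hKinvr : K * (R⁻¹ * (-J * R⁻¹)) = 1 := by
    rw [hKdef]
    simp only [Matrix.mul_assoc, hRr, hJr]
    rw [hRRinv]
  have hKinj : ∀ x, K.mulVec x = 0 → x = 0 := by
    intro x hx
    have hL : (R⁻¹ * (-J * R⁻¹)) * K = 1 := mul_eq_one_comm.mp hKinvr
    calc x = (1 : Matrix (Fin n ⊕ Fin n) (Fin n ⊕ Fin n) ℝ).mulVec x := by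
            rw [Matrix.one_mulVec]
    _ = ((R⁻¹ * (-J * R⁻¹)) * K).mulVec x := by rw [hL]
    _ = (R⁻¹ * (-J * R⁻¹)).mulVec (K.mulVec x) := by rw [Matrix.mulVec_mulVec]
    _ = 0 := by rw [hx, Matrix.mulVec_zero]
  have hCmsym : Cmᵀ = Cm := by
    rw [hCmdef, Matrix.transpose_mul, Matrix.transpose_mul, hRinvsym, hB'symm.eq,
      ← Matrix.mul_assoc]
  have hKCm : K * Cm = Cm * K := by
    have lhs : K * Cm = R * (J * (B' * R⁻¹)) := by
      rw [hKdef, hCmdef]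
      simp only [Matrix.mul_assoc, hRr]
    have rhs : Cm * K = R⁻¹ * (B' * (J * R)) := by
      rw [hKdef, hCmdef]
      simp only [Matrix.mul_assoc, hRr']
    rw [lhs, rhs]
    have h := congrArg (fun X => R⁻¹ * (X * R⁻¹)) hBJB
    rw [← hRR] at h
    simp only [Matrix.mul_assoc] at h
    rw [hRr'] at h
    rw [hRRinv, Matrix.mul_one] at h
    exact h
  obtain ⟨O, d, μ, hOO, hOO', hd, hOK, hOC⟩ := matrix_core n K Cm hKskew hKinj hCmsym hKCm
  have hOr : ∀ X, O * (Oᵀ * X) = X := fun X => by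
    rw [← Matrix.mul_assoc, hOO, Matrix.one_mul]
  have hOr' : ∀ X, Oᵀ * (O * X) = X := fun X => by
    rw [← Matrix.mul_assoc, hOO', Matrix.one_mul]
  -- diagonal scaling
  set s : Fin n → ℝ := fun j => Real.sqrt (d j) with hsdef
  have hs0 : ∀ j, 0 < s j := fun j => Real.sqrt_pos.mpr (hd j)
  have hss : ∀ j, s j * s j = d j := fun j => Real.mul_self_sqrt (le_of_lt (hd j))
  set si : Fin n → ℝ := fun j => (s j)⁻¹ with hsidef
  set Ds : Matrix (Fin n ⊕ Fin n) (Fin n ⊕ Fin n) ℝ :=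
    Matrix.fromBlocks (Matrix.diagonal si) 0 0 (Matrix.diagonal si) with hDsdef
  set Dinv : Matrix (Fin n ⊕ Fin n) (Fin n ⊕ Fin n) ℝ :=
    Matrix.fromBlocks (Matrix.diagonal s) 0 0 (Matrix.diagonal s) with hDinvdef
  have hdiag1 : Matrix.diagonal si * Matrix.diagonal s = 1 := by
    rw [Matrix.diagonal_mul_diagonal, ← Matrix.diagonal_one]
    exact congrArg Matrix.diagonal (funext fun j => inv_mul_cancel₀ (ne_of_gt (hs0 j)))
  have hdiag1' : Matrix.diagonal s * Matrix.diagonal si = 1 := by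
    rw [Matrix.diagonal_mul_diagonal, ← Matrix.diagonal_one]
    exact congrArg Matrix.diagonal (funext fun j => mul_inv_cancel₀ (ne_of_gt (hs0 j)))
  have hDsDinv : Ds * Dinv = 1 := by
    rw [hDsdef, hDinvdef, Matrix.fromBlocks_multiply]
    simp [hdiag1, Matrix.fromBlocks_one]
  have hDinvDs : Dinv * Ds = 1 := by
    rw [hDsdef, hDinvdef, Matrix.fromBlocks_multiply]
    simp [hdiag1', Matrix.fromBlocks_one]
  have hDssym : Dsᵀ = Ds := by
    rw [hDsdef, Matrix.fromBlocks_transpose]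
    simp [Matrix.diagonal_transpose]
  have hDinvsym : Dinvᵀ = Dinv := by
    rw [hDinvdef, Matrix.fromBlocks_transpose]
    simp [Matrix.diagonal_transpose]
  set S := Ds * O * R with hSdef
  have hST : Sᵀ = R * (Oᵀ * Ds) := by
    rw [hSdef, Matrix.transpose_mul, Matrix.transpose_mul, hRsym, hDssym]
  -- S J Sᵀ = J
  have h1 : S * J * Sᵀ = Ds * ((O * K * Oᵀ) * Ds) := by
    rw [hSdef, hST, hKdef]
    simp only [Matrix.mul_assoc]
  have hdds : Matrix.diagonal si * (Matrix.diagonal d * Matrix.diagonal si) = 1 := by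
    rw [Matrix.diagonal_mul_diagonal, Matrix.diagonal_mul_diagonal, ← Matrix.diagonal_one]
    refine congrArg Matrix.diagonal (funext fun j => ?_)
    show (s j)⁻¹ * (d j * (s j)⁻¹) = 1
    rw [← hss j]
    field_simp [ne_of_gt (hs0 j)]
  have h2 : S * J * Sᵀ = J := by
    rw [h1, hOK, hDsdef, hJ, Matrix.fromBlocks_multiply, Matrix.fromBlocks_multiply]
    simp only [Matrix.mul_zero, Matrix.zero_mul, add_zero, zero_add, Matrix.neg_mul,
      Matrix.mul_neg, Matrix.mul_assoc, hdds, neg_zero]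
  -- invertibility of S
  have hSright : S * (R⁻¹ * (Oᵀ * Dinv)) = 1 := by
    rw [hSdef]
    simp only [Matrix.mul_assoc, hRr, hOr]
    exact hDsDinv
  have hSinv : S⁻¹ = R⁻¹ * (Oᵀ * Dinv) := Matrix.inv_eq_right_inv hSright
  have hSdet : IsUnit S.det := by
    apply IsUnit.of_mul_eq_one ((R⁻¹ * (Oᵀ * Dinv)).det)
    rw [← Matrix.det_mul, hSright, Matrix.det_one]
  have hSTdet : IsUnit (Sᵀ).det := by rwa [Matrix.det_transpose]
  have hSTinv : (Sᵀ)⁻¹ = Dinv * (O * R⁻¹) := by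
    rw [← Matrix.transpose_nonsing_inv, hSinv, Matrix.transpose_mul, Matrix.transpose_mul,
      hRinvsym, hDinvsym, Matrix.transpose_transpose, Matrix.mul_assoc]
  -- symplectic condition
  have hJ2 : (Sᵀ)⁻¹ * J * S⁻¹ = J := by
    have hinv : (S * J * Sᵀ)⁻¹ = J⁻¹ := by rw [h2]
    rw [Matrix.mul_inv_rev, Matrix.mul_inv_rev] at hinv
    have hJinveq : J⁻¹ = -J := Matrix.inv_eq_right_inv hJinv
    rw [hJinveq] at hinv
    -- hinv : (Sᵀ)⁻¹ * (-J * S⁻¹)?? check associativity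
    have := congrArg Neg.neg hinv
    simp only [Matrix.neg_mul, Matrix.mul_neg, neg_neg] at this ⊢
    rw [← Matrix.mul_assoc] at this
    exact this
  have hsymp : Sᵀ * J * S = J := by
    have h := congrArg (fun X => Sᵀ * X * S) hJ2
    rw [show Sᵀ * ((Sᵀ)⁻¹ * J * S⁻¹) * S = (Sᵀ * (Sᵀ)⁻¹) * J * (S⁻¹ * S) by
      simp only [Matrix.mul_assoc], Matrix.mul_nonsing_inv _ hSTdet,
      Matrix.nonsing_inv_mul _ hSdet, Matrix.one_mul, Matrix.mul_one] at h
    exact h.symm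
  -- the two diagonalizations
  have hB'e : B' = R * (Cm * R) := by
    calc B' = B' * (R⁻¹ * R) := by rw [hRinvR, Matrix.mul_one]
    _ = R * (R⁻¹ * (B' * (R⁻¹ * R))) := by rw [hRr]
    _ = R * (Cm * R) := by rw [hCmdef]; simp only [Matrix.mul_assoc]
  have hdiagd : Matrix.diagonal s * Matrix.diagonal s = Matrix.diagonal d := by
    rw [Matrix.diagonal_mul_diagonal]
    exact congrArg Matrix.diagonal (funext fun j => hss j)
  have hDinv2 : Dinv * Dinv = Matrix.fromBlocks (Matrix.diagonal d) 0 0 (Matrix.diagonal d) := by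
    rw [hDinvdef, Matrix.fromBlocks_multiply]
    simp [hdiagd]
  have hcond2 : (Sᵀ)⁻¹ * B * S⁻¹ =
      Matrix.fromBlocks (Matrix.diagonal d) 0 0 (Matrix.diagonal d) := by
    rw [hSTinv, hSinv, ← hRR]
    simp only [Matrix.mul_assoc, hRr, hRr', hOr]
    exact hDinv2
  have hdiagmu : Matrix.diagonal s * (Matrix.diagonal μ * Matrix.diagonal s) =
      Matrix.diagonal (fun j => d j * μ j) := by
    rw [Matrix.diagonal_mul_diagonal, Matrix.diagonal_mul_diagonal]
    refine congrArg Matrix.diagonal (funext fun j => ?_)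
    show s j * (μ j * s j) = d j * μ j
    rw [← hss j]; ring
  have hcond3 : (Sᵀ)⁻¹ * B' * S⁻¹ =
      Matrix.fromBlocks (Matrix.diagonal (fun j => d j * μ j)) 0 0
        (Matrix.diagonal (fun j => d j * μ j)) := by
    rw [hSTinv, hSinv, hB'e]
    have : Dinv * (O * R⁻¹) * (R * (Cm * R)) * (R⁻¹ * (Oᵀ * Dinv)) =
        Dinv * ((O * Cm * Oᵀ) * Dinv) := by
      simp only [Matrix.mul_assoc, hRr, hRr']
    rw [this, hOC, hDinvdef, Matrix.fromBlocks_multiply, Matrix.fromBlocks_multiply]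
    simp only [Matrix.mul_zero, Matrix.zero_mul, add_zero, zero_add, Matrix.mul_assoc, hdiagmu]
  exact ⟨S, d, fun j => d j * μ j, hsymp, hd, hcond2, hcond3⟩
end

section
/- With S symplectic, γ̄ = diag(γ₁,…,γₙ) with γⱼ > 0, and k = (1/2)coth(ħβw/2) entrywise for w = diag(ω₁,…,ωₙ), ωⱼ > 0, define D = ħ² S⁻¹ (γ̄k ⊕ γ̄k) S⁻ᵀ and C = (ħ/2) S⁻¹ Jᵀ (γ̄ ⊕ γ̄) S⁻ᵀ. Then JD and JC commute, and JV := (1/(2ħ)) JD (JC)⁻¹ gives V = S⁻¹ (k ⊕ k) S⁻ᵀ, independent of γ̄. -/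
open Matrix

private lemma tciaux_comm {n : ℕ} (d : Fin n → ℝ) :
    (fromBlocks 0 1 (-1) 0 : Matrix (Fin n ⊕ Fin n) (Fin n ⊕ Fin n) ℝ) *
      fromBlocks (diagonal d) 0 0 (diagonal d)
    = fromBlocks (diagonal d) 0 0 (diagonal d) * fromBlocks 0 1 (-1) 0 := by
  simp only [Matrix.fromBlocks_multiply, Matrix.zero_mul, Matrix.mul_zero, Matrix.one_mul,
    Matrix.mul_one, zero_add, add_zero, Matrix.neg_mul, Matrix.mul_neg, neg_zero]

private lemma tciaux_mul {n : ℕ} (d e : Fin n → ℝ) :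
    (fromBlocks (diagonal d) 0 0 (diagonal d) : Matrix (Fin n ⊕ Fin n) (Fin n ⊕ Fin n) ℝ) *
      fromBlocks (diagonal e) 0 0 (diagonal e)
    = fromBlocks (diagonal fun j => d j * e j) 0 0 (diagonal fun j => d j * e j) := by
  simp only [Matrix.fromBlocks_multiply, Matrix.zero_mul, Matrix.mul_zero, zero_add, add_zero,
    Matrix.diagonal_mul_diagonal]

private lemma tciaux_JJ {n : ℕ} :
    (fromBlocks 0 1 (-1) 0 : Matrix (Fin n ⊕ Fin n) (Fin n ⊕ Fin n) ℝ) *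
      fromBlocks 0 1 (-1) 0 = -1 := by
  rw [← Matrix.fromBlocks_one]
  simp only [Matrix.fromBlocks_multiply, Matrix.zero_mul, Matrix.mul_zero, Matrix.one_mul,
    zero_add, add_zero, Matrix.neg_mul, Matrix.mul_neg, Matrix.fromBlocks_neg, neg_zero,
    Matrix.mul_one]

private lemma tciaux_JT {n : ℕ} :
    (fromBlocks 0 1 (-1) 0 : Matrix (Fin n ⊕ Fin n) (Fin n ⊕ Fin n) ℝ)ᵀ
      = -fromBlocks 0 1 (-1) 0 := by
  simp only [Matrix.fromBlocks_transpose, Matrix.transpose_zero, Matrix.transpose_one,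
    Matrix.transpose_neg, Matrix.fromBlocks_neg, neg_zero, neg_neg]

theorem thermal_covariance_independent_of_couplings
    (n : ℕ) (hbar β : ℝ) (hhbar : 0 < hbar) (hβ : 0 < β)
    (J : Matrix (Fin n ⊕ Fin n) (Fin n ⊕ Fin n) ℝ)
    (hJ : J = Matrix.fromBlocks 0 1 (-1) 0)
    (S : Matrix (Fin n ⊕ Fin n) (Fin n ⊕ Fin n) ℝ)
    (hS : Sᵀ * J * S = J)
    (γ w : Fin n → ℝ) (hγ : ∀ j, 0 < γ j) (hw : ∀ j, 0 < w j) :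
    let k : Fin n → ℝ := fun j =>
      (1 / 2) * (Real.cosh (hbar * β * w j / 2) / Real.sinh (hbar * β * w j / 2))
    let D : Matrix (Fin n ⊕ Fin n) (Fin n ⊕ Fin n) ℝ :=
      (hbar ^ 2) • (S⁻¹ *
        Matrix.fromBlocks (Matrix.diagonal fun j => γ j * k j) 0 0
          (Matrix.diagonal fun j => γ j * k j) * (Sᵀ)⁻¹)
    let C : Matrix (Fin n ⊕ Fin n) (Fin n ⊕ Fin n) ℝ :=
      (hbar / 2) • (S⁻¹ * Jᵀ *
        Matrix.fromBlocks (Matrix.diagonal γ) 0 0 (Matrix.diagonal γ) * (Sᵀ)⁻¹)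
    (J * D) * (J * C) = (J * C) * (J * D) ∧
    (1 / (2 * hbar)) • ((J * D) * (J * C)⁻¹)
      = J * (S⁻¹ * Matrix.fromBlocks (Matrix.diagonal k) 0 0 (Matrix.diagonal k) * (Sᵀ)⁻¹) := by
  intro k D C
  -- notation for block matrices
  set B : (Fin n → ℝ) → Matrix (Fin n ⊕ Fin n) (Fin n ⊕ Fin n) ℝ :=
    fun d => fromBlocks (diagonal d) 0 0 (diagonal d) with hB
  have hJT : Jᵀ = -J := by rw [hJ]; exact tciaux_JT
  have hJJ : J * J = -1 := by rw [hJ]; exact tciaux_JJ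
  have hJJT : J * Jᵀ = 1 := by rw [hJT, Matrix.mul_neg, hJJ, neg_neg]
  have hcomm : ∀ d : Fin n → ℝ, J * B d = B d * J := by
    intro d; rw [hJ, hB]; exact tciaux_comm d
  have hBmul : ∀ d e : Fin n → ℝ, B d * B e = B (fun j => d j * e j) := by
    intro d e; rw [hB]; exact tciaux_mul d e
  -- invertibility
  have hdetJ : IsUnit J.det := by
    apply Matrix.isUnit_det_of_right_inverse (B := -J)
    rw [Matrix.mul_neg, hJJ, neg_neg]
  have hdetS : IsUnit S.det := by
    have h := congrArg Matrix.det hS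
    rw [Matrix.det_mul, Matrix.det_mul, Matrix.det_transpose] at h
    have hJ0 : J.det ≠ 0 := hdetJ.ne_zero
    have h2 : S.det * S.det = 1 := by
      have h3 : S.det * S.det * J.det = 1 * J.det := by linear_combination h
      exact mul_right_cancel₀ hJ0 h3
    exact IsUnit.of_mul_eq_one _ h2
  have hdetST : IsUnit (Sᵀ).det := by rwa [Matrix.det_transpose]
  have hSS : S * S⁻¹ = 1 := Matrix.mul_nonsing_inv S hdetS
  have hST : (Sᵀ)⁻¹ * Sᵀ = 1 := Matrix.nonsing_inv_mul _ hdetST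
  have hJS : J * S⁻¹ = Sᵀ * J := by
    have h1 : Sᵀ * J * S * S⁻¹ = J * S⁻¹ := by rw [hS]
    rw [mul_assoc, hSS, mul_one] at h1
    exact h1.symm
  -- key conjugation identity
  have key : ∀ d : Fin n → ℝ,
      J * (S⁻¹ * B d * (Sᵀ)⁻¹) = Sᵀ * (B d * (J * (Sᵀ)⁻¹)) := by
    intro d
    rw [← mul_assoc, ← mul_assoc, hJS, mul_assoc Sᵀ J, hcomm d, ← mul_assoc,
      mul_assoc, mul_assoc]
  -- normal forms for J*D and J*C
  have hJD : J * D = (hbar ^ 2) •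
      (Sᵀ * (B (fun j => γ j * k j) * (J * (Sᵀ)⁻¹))) := by
    show J * ((hbar ^ 2) • (S⁻¹ * B (fun j => γ j * k j) * (Sᵀ)⁻¹)) = _
    rw [Matrix.mul_smul, key]
  have hJC : J * C = (hbar / 2) • (Sᵀ * (B γ * (Sᵀ)⁻¹)) := by
    show J * ((hbar / 2) • (S⁻¹ * Jᵀ * B γ * (Sᵀ)⁻¹)) = _
    rw [Matrix.mul_smul]
    congr 1
    rw [← mul_assoc, ← mul_assoc, ← mul_assoc, hJS, mul_assoc Sᵀ J, hJJT, mul_one,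
      mul_assoc]
  have collapse : ∀ d e : Fin n → ℝ,
      (Sᵀ * (B d * (Sᵀ)⁻¹)) * (Sᵀ * (B e * (Sᵀ)⁻¹))
        = Sᵀ * (B (fun j => d j * e j) * (Sᵀ)⁻¹) := by
    intro d e
    simp only [mul_assoc]
    rw [← mul_assoc ((Sᵀ)⁻¹) Sᵀ, hST, one_mul, ← mul_assoc (B d) (B e), hBmul]
  have collapseJ : ∀ d e : Fin n → ℝ,
      (Sᵀ * (B d * (J * (Sᵀ)⁻¹))) * (Sᵀ * (B e * (Sᵀ)⁻¹))
        = Sᵀ * (B (fun j => d j * e j) * (J * (Sᵀ)⁻¹)) := by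
    intro d e
    simp only [mul_assoc]
    rw [← mul_assoc ((Sᵀ)⁻¹) Sᵀ, hST, one_mul, ← mul_assoc J (B e), hcomm e,
      mul_assoc (B e), ← mul_assoc (B d) (B e), hBmul]
  have collapseJ' : ∀ d e : Fin n → ℝ,
      (Sᵀ * (B e * (Sᵀ)⁻¹)) * (Sᵀ * (B d * (J * (Sᵀ)⁻¹)))
        = Sᵀ * (B (fun j => e j * d j) * (J * (Sᵀ)⁻¹)) := by
    intro d e
    simp only [mul_assoc]
    rw [← mul_assoc ((Sᵀ)⁻¹) Sᵀ, hST, one_mul, ← mul_assoc (B e) (B d), hBmul]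
  have hγ0 : ∀ j, γ j ≠ 0 := fun j => (hγ j).ne'
  constructor
  · rw [hJD, hJC, Matrix.smul_mul, Matrix.mul_smul, Matrix.smul_mul, Matrix.mul_smul,
      smul_smul, smul_smul, collapseJ, collapseJ']
    have hf : (fun j => (γ j * k j) * γ j) = (fun j => γ j * (γ j * k j)) := by
      funext j; ring
    rw [hf, mul_comm (hbar ^ 2) (hbar / 2)]
  · -- part 2
    have hJCinv : (J * C)⁻¹ = (2 / hbar) • (Sᵀ * (B (fun j => (γ j)⁻¹) * (Sᵀ)⁻¹)) := by
      apply Matrix.inv_eq_right_inv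
      rw [hJC, Matrix.smul_mul, Matrix.mul_smul, smul_smul, collapse]
      have h1 : (fun j => γ j * (γ j)⁻¹) = fun _ => (1 : ℝ) := by
        funext j; exact mul_inv_cancel₀ (hγ0 j)
      rw [h1]
      have h2 : hbar / 2 * (2 / hbar) = 1 := by
        field_simp
      rw [h2, one_smul, hB]
      simp only [Matrix.diagonal_one, Matrix.fromBlocks_one]
      rw [one_mul]
      exact Matrix.mul_nonsing_inv _ hdetST
    rw [hJD, hJCinv, Matrix.smul_mul, Matrix.mul_smul, smul_smul, smul_smul, collapseJ]
    have h3 : (fun j => γ j * k j * (γ j)⁻¹) = k := by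
      funext j
      rw [mul_comm (γ j) (k j)]
      exact mul_inv_cancel_right₀ (hγ0 j) (k j)
    have h4 : 1 / (2 * hbar) * hbar ^ 2 * (2 / hbar) = 1 := by
      field_simp
    rw [h3, h4, one_smul, key k]
end
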